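/- arXiv:2404.07125 — 4 statements merged into one kernel-verified Lean document; each statement's English description precedes it below -/
import Mathlib

section
/- Let n, t ≥ 1 and let a : ℕ^n → ℝ^t be a family of vectors whose range spans ℝ^t. Suppose there exists a sequence y : ℕ^n → ℝ such that ⟨a_α, a_β⟩ = y(α+β) for all α, β ∈ ℕ^n. Fix i ∈ {1,…,n} and let T : ℝ^t → ℝ^t be a linear map satisfying T(a_α) = a_{α+e_i} for all α ∈ ℕ^n. Then T is symmetric, i.e., ⟨T u, v⟩ = ⟨u, T v⟩ for all u, v ∈ ℝ^t. -/
open scoped BigOperators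

/-- if ⟨a_α, a_β⟩ = y(α+β) for all α, β and T is a linear map on ℝ^t with
T(a_α) = a_{α+e_i}, where the range of a spans ℝ^t, then T is symmetric. -/
theorem stmt2 (n t : ℕ) (hn : 1 ≤ n) (ht : 1 ≤ t)
    (a : (Fin n → ℕ) → EuclideanSpace ℝ (Fin t))
    (hspan : Submodule.span ℝ (Set.range a) = ⊤)
    (y : (Fin n → ℕ) → ℝ)
    (hy : ∀ α β : Fin n → ℕ, (inner ℝ (a α) (a β) : ℝ) = y (α + β))
    (i : Fin n)
    (T : EuclideanSpace ℝ (Fin t) →ₗ[ℝ] EuclideanSpace ℝ (Fin t))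
    (hT : ∀ α : Fin n → ℕ, T (a α) = a (α + fun j => if j = i then 1 else 0)) :
    ∀ u v : EuclideanSpace ℝ (Fin t), (inner ℝ (T u) v : ℝ) = inner ℝ u (T v) := by
  have key : ∀ α β : Fin n → ℕ, (inner ℝ (T (a α)) (a β) : ℝ) = inner ℝ (a α) (T (a β)) := by
    intro α β
    rw [hT, hT, hy, hy]
    congr 1
    funext j
    simp [add_comm, add_assoc, add_left_comm]
  have main : ∀ u ∈ Submodule.span ℝ (Set.range a),
      ∀ v ∈ Submodule.span ℝ (Set.range a),
      (inner ℝ (T u) v : ℝ) = inner ℝ u (T v) := by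
    intro u hu
    induction hu using Submodule.span_induction with
    | mem u hu =>
      obtain ⟨α, rfl⟩ := hu
      intro v hv
      induction hv using Submodule.span_induction with
      | mem v hv => obtain ⟨β, rfl⟩ := hv; exact key α β
      | zero => simp
      | add v w _ _ ihv ihw => simp [inner_add_right, map_add, ihv, ihw]
      | smul c v _ ih => simp [inner_smul_right, map_smul, ih]
    | zero => intro v hv; simp
    | add u w _ _ ihu ihw =>
      intro v hv
      simp [inner_add_left, map_add, ihu v hv, ihw v hv]
    | smul c u _ ih =>
      intro v hv
      simp [inner_smul_left, map_smul, ih v hv]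
  intro u v
  exact main u (hspan ▸ Submodule.mem_top) v (hspan ▸ Submodule.mem_top)
end

section
/- Let n, t ≥ 1, let s ∈ ℕ, fix i ∈ {1,…,n}, and let a : ℕ^n → ℂ^t be a family of vectors such that {a_α : |α| ≤ s} spans ℂ^t. Let T : ℂ^t → ℂ^t be a linear map satisfying T(a_α) = a_{α+e_i} for all α ∈ ℕ^n. Then T is normal (T∘T* = T*∘T, where T* is the adjoint) if and only if the Hermitian block matrix indexed by two copies of ℕ^n_s, whose (β,γ) entry is ⟨a_β, a_γ⟩ on the top-left block, ⟨a_{β+e_i}, a_γ⟩ on the top-right block, ⟨a_β, a_{γ+e_i}⟩ on the bottom-left block, and ⟨a_{β+e_i}, a_{γ+e_i}⟩ on the bottom-right block, is positive semidefinite. -/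
open scoped BigOperators ComplexOrder

/-- `MultiIdx n s` is the set ℕ^n_s = {α ∈ ℕ^n : |α| ≤ s}. -/
abbrev MultiIdx (n s : ℕ) := {α : Fin n → ℕ // (∑ j, α j) ≤ s}

instance MultiIdx.finite (n s : ℕ) : Finite (MultiIdx n s) :=
  Finite.of_injective
    (fun a => (fun j => (⟨a.1 j, Nat.lt_succ_of_le
      ((Finset.single_le_sum (fun k _ => Nat.zero_le (a.1 k)) (Finset.mem_univ j)).trans
        a.2)⟩ : Fin (s + 1))))
    (fun _ _ h => Subtype.ext (funext fun j => congrArg Fin.val (congrFun h j)))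

noncomputable instance MultiIdx.fintype (n s : ℕ) : Fintype (MultiIdx n s) :=
  Fintype.ofFinite _

/-- the i-th standard unit multi-index e_i ∈ ℕ^n. -/
def unitIdx {n : ℕ} (i : Fin n) : Fin n → ℕ := fun j => if j = i then 1 else 0


open scoped BigOperators ComplexOrder

section Helpers

variable {t : ℕ}

local notation "E" => EuclideanSpace ℂ (Fin t)

lemma inner_eu (x y : E) : (inner ℂ x y : ℂ) = ∑ k, (starRingEnd ℂ) (x k) * y k := by
  simp [PiLp.inner_apply, RCLike.inner_apply, mul_comm]

lemma gram_expand {ι : Type*} [Fintype ι] (v w : ι → E) (c d : ι → ℂ) :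
    (inner ℂ (∑ i, c i • v i) (∑ j, d j • w j) : ℂ)
      = ∑ i, ∑ j, (starRingEnd ℂ) (c i) * ((inner ℂ (v i) (w j) : ℂ) * d j) := by
  rw [sum_inner]
  refine Finset.sum_congr rfl fun i _ => ?_
  rw [inner_smul_left, inner_sum, Finset.mul_sum]
  refine Finset.sum_congr rfl fun j _ => ?_
  rw [inner_smul_right]; ring

lemma norm_sq_eu (x : E) : ‖x‖^2 = ∑ k, ‖x k‖^2 := by
  rw [EuclideanSpace.norm_eq, Real.sq_sqrt (Finset.sum_nonneg fun k _ => sq_nonneg _)]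

lemma adjoint_coord (T : E →ₗ[ℂ] E) (j k : Fin t) :
    (LinearMap.adjoint T (EuclideanSpace.single j 1)) k
      = (starRingEnd ℂ) ((T (EuclideanSpace.single k 1)) j) := by
  have h1 : ∀ (x : E) (m : Fin t), x m = (inner ℂ (EuclideanSpace.single m (1:ℂ)) x : ℂ) := by
    intro x m
    simp [EuclideanSpace.inner_single_left]
  calc (LinearMap.adjoint T (EuclideanSpace.single j 1)) k
      = (inner ℂ (EuclideanSpace.single k (1:ℂ)) (LinearMap.adjoint T (EuclideanSpace.single j 1)) : ℂ) :=
        h1 _ k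
    _ = (inner ℂ (T (EuclideanSpace.single k 1)) (EuclideanSpace.single j (1:ℂ)) : ℂ) :=
        LinearMap.adjoint_inner_right T _ _
    _ = (starRingEnd ℂ) (inner ℂ (EuclideanSpace.single j (1:ℂ)) (T (EuclideanSpace.single k 1)) : ℂ) :=
        (inner_conj_symm _ _).symm
    _ = (starRingEnd ℂ) ((T (EuclideanSpace.single k 1)) j) := by rw [← h1 _ j]

end Helpers

section Helpers2
variable {t : ℕ}
local notation "E" => EuclideanSpace ℂ (Fin t)

lemma psd_apply_eq_zero (S : E →ₗ[ℂ] E) (hsym : S.IsSymmetric)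
    (hpos : ∀ x : E, 0 ≤ (inner ℂ x (S x) : ℂ).re)
    (x : E) (hx : (inner ℂ x (S x) : ℂ).re = 0) : S x = 0 := by
  have expand : ∀ r : ℝ, (inner ℂ (x + (r:ℂ) • S x) (S (x + (r:ℂ) • S x)) : ℂ).re
      = (inner ℂ (S x) (S (S x)) : ℂ).re * (r*r) + (2*‖S x‖^2) * r
        + (inner ℂ x (S x) : ℂ).re := by
    intro r
    rw [map_add, map_smul, inner_add_left, inner_add_right, inner_add_right,
      inner_smul_left, inner_smul_right, inner_smul_left, inner_smul_right]
    rw [← hsym x (S x), inner_self_eq_norm_sq_to_K]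
    simp [Complex.conj_ofReal, Complex.add_re, Complex.ofReal_re, ← Complex.ofReal_pow]
    ring
  have key : ∀ r : ℝ, 0 ≤ (inner ℂ (S x) (S (S x)) : ℂ).re * (r*r) + (2*‖S x‖^2) * r + 0 := by
    intro r
    have h := hpos (x + (r:ℂ) • S x)
    rw [expand r, hx] at h
    simpa using h
  have hd := discrim_le_zero key
  rw [discrim] at hd
  have hb : (2*‖S x‖^2) = 0 := by nlinarith [sq_nonneg (2*‖S x‖^2)]
  have : ‖S x‖ = 0 := by nlinarith [norm_nonneg (S x)]
  simpa using this

end Helpers2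

section Helpers3
variable {t : ℕ}
local notation "E" => EuclideanSpace ℂ (Fin t)

lemma sum_norm_adjoint (T : E →ₗ[ℂ] E) :
    ∑ j, ‖LinearMap.adjoint T (EuclideanSpace.single j 1)‖^2
      = ∑ j, ‖T (EuclideanSpace.single j 1)‖^2 := by
  simp_rw [norm_sq_eu]
  rw [Finset.sum_comm]
  refine Finset.sum_congr rfl fun k _ => Finset.sum_congr rfl fun j _ => ?_
  rw [adjoint_coord]
  simp

end Helpers3

section Helpers4
open Matrix
variable {t : ℕ}
local notation "E" => EuclideanSpace ℂ (Fin t)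

lemma gram_psd {ι : Type*} [Fintype ι] (v : ι → E) :
    (Matrix.of fun j j' : ι => (inner ℂ (v j) (v j') : ℂ)).PosSemidef := by
  have h : (Matrix.of fun j j' : ι => (inner ℂ (v j) (v j') : ℂ))
      = (Matrix.of fun (k : Fin t) (j : ι) => v j k)ᴴ * (Matrix.of fun k j => v j k) := by
    ext j j'
    rw [Matrix.of_apply, inner_eu, Matrix.mul_apply]
    simp [Matrix.conjTranspose_apply]
  rw [h]
  exact Matrix.posSemidef_conjTranspose_mul_self _
end Helpers4

/-- if {a_α : |α| ≤ s} spans ℂ^t and T is linear with T(a_α) = a_{α+e_i}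
for all α, then T is normal iff the Hermitian block matrix with blocks ⟨a_β, a_γ⟩,
⟨a_{β+e_i}, a_γ⟩, ⟨a_β, a_{γ+e_i}⟩, ⟨a_{β+e_i}, a_{γ+e_i}⟩ (indexed by two copies of
ℕ^n_s) is positive semidefinite. -/
theorem stmt7 (n t : ℕ) (hn : 1 ≤ n) (ht : 1 ≤ t) (s : ℕ) (i : Fin n)
    (a : (Fin n → ℕ) → EuclideanSpace ℂ (Fin t))
    (hspan : Submodule.span ℂ (a '' {α : Fin n → ℕ | (∑ j, α j) ≤ s}) = ⊤)
    (T : EuclideanSpace ℂ (Fin t) →ₗ[ℂ] EuclideanSpace ℂ (Fin t))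
    (hT : ∀ α : Fin n → ℕ, T (a α) = a (α + unitIdx i)) :
    (T ∘ₗ LinearMap.adjoint T = LinearMap.adjoint T ∘ₗ T) ↔
      (Matrix.fromBlocks
        (Matrix.of fun β γ : MultiIdx n s => (inner ℂ (a β.1) (a γ.1) : ℂ))
        (Matrix.of fun β γ : MultiIdx n s => (inner ℂ (a (β.1 + unitIdx i)) (a γ.1) : ℂ))
        (Matrix.of fun β γ : MultiIdx n s => (inner ℂ (a β.1) (a (γ.1 + unitIdx i)) : ℂ))
        (Matrix.of fun β γ : MultiIdx n s =>
          (inner ℂ (a (β.1 + unitIdx i)) (a (γ.1 + unitIdx i)) : ℂ))).PosSemidef := by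
  constructor
  · -- forward: normal → PSD
    intro hnormal
    set u : MultiIdx n s ⊕ MultiIdx n s → EuclideanSpace ℂ (Fin t) :=
      Sum.elim (fun β => a β.1) (fun β => LinearMap.adjoint T (a β.1)) with hu
    have hMeq : (Matrix.fromBlocks
        (Matrix.of fun β γ : MultiIdx n s => (inner ℂ (a β.1) (a γ.1) : ℂ))
        (Matrix.of fun β γ : MultiIdx n s => (inner ℂ (a (β.1 + unitIdx i)) (a γ.1) : ℂ))
        (Matrix.of fun β γ : MultiIdx n s => (inner ℂ (a β.1) (a (γ.1 + unitIdx i)) : ℂ))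
        (Matrix.of fun β γ : MultiIdx n s =>
          (inner ℂ (a (β.1 + unitIdx i)) (a (γ.1 + unitIdx i)) : ℂ)))
        = Matrix.of fun j j' => (inner ℂ (u j) (u j') : ℂ) := by
      ext j j'
      cases j with
      | inl β =>
        cases j' with
        | inl γ => simp [hu]
        | inr γ =>
          simp only [Matrix.fromBlocks_apply₁₂, Matrix.of_apply, hu, Sum.elim_inl, Sum.elim_inr]
          rw [LinearMap.adjoint_inner_right, hT]
      | inr β =>
        cases j' with
        | inl γ =>
          simp only [Matrix.fromBlocks_apply₂₁, Matrix.of_apply, hu, Sum.elim_inl, Sum.elim_inr]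
          rw [LinearMap.adjoint_inner_left, hT]
        | inr γ =>
          simp only [Matrix.fromBlocks_apply₂₂, Matrix.of_apply, hu, Sum.elim_inr]
          rw [LinearMap.adjoint_inner_left]
          have h2 : T (LinearMap.adjoint T (a γ.1)) = LinearMap.adjoint T (T (a γ.1)) := by
            rw [← LinearMap.comp_apply, ← LinearMap.comp_apply, hnormal]
          rw [h2, LinearMap.adjoint_inner_right, hT, hT]
    rw [hMeq]
    exact gram_psd u
  · intro hM
    classical
    have hrange : Submodule.span ℂ (Set.range fun β : MultiIdx n s => a β.1) = ⊤ := by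
      rw [Set.image_eq_range] at hspan
      exact hspan
    have key0 : ∀ c d : MultiIdx n s → ℂ,
        dotProduct (star (Sum.elim c d))
          (Matrix.mulVec (Matrix.fromBlocks
            (Matrix.of fun β γ : MultiIdx n s => (inner ℂ (a β.1) (a γ.1) : ℂ))
            (Matrix.of fun β γ : MultiIdx n s => (inner ℂ (a (β.1 + unitIdx i)) (a γ.1) : ℂ))
            (Matrix.of fun β γ : MultiIdx n s => (inner ℂ (a β.1) (a (γ.1 + unitIdx i)) : ℂ))
            (Matrix.of fun β γ : MultiIdx n s =>
              (inner ℂ (a (β.1 + unitIdx i)) (a (γ.1 + unitIdx i)) : ℂ))) (Sum.elim c d))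
        = (inner ℂ (∑ β, c β • a β.1) (∑ β, c β • a β.1) : ℂ)
          + (inner ℂ (∑ β, c β • a (β.1 + unitIdx i)) (∑ β, d β • a β.1) : ℂ)
          + (inner ℂ (∑ β, d β • a β.1) (∑ β, c β • a (β.1 + unitIdx i)) : ℂ)
          + (inner ℂ (∑ β, d β • a (β.1 + unitIdx i)) (∑ β, d β • a (β.1 + unitIdx i)) : ℂ) := by
      intro c d
      rw [gram_expand, gram_expand, gram_expand, gram_expand]
      simp only [dotProduct, Matrix.mulVec, Fintype.sum_sum_type, Sum.elim_inl,
        Sum.elim_inr, Pi.star_apply, Matrix.fromBlocks_apply₁₁, Matrix.fromBlocks_apply₁₂,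
        Matrix.fromBlocks_apply₂₁, Matrix.fromBlocks_apply₂₂, Matrix.of_apply, RCLike.star_def,
        Finset.mul_sum, mul_add, Finset.sum_add_distrib]
      ring
    have key : ∀ p q : EuclideanSpace ℂ (Fin t),
        0 ≤ ‖p‖^2 + 2 * (inner ℂ (T p) q : ℂ).re + ‖T q‖^2 := by
      intro p q
      have hp : p ∈ Submodule.span ℂ (Set.range fun β : MultiIdx n s => a β.1) := by
        rw [hrange]; exact Submodule.mem_top
      have hq : q ∈ Submodule.span ℂ (Set.range fun β : MultiIdx n s => a β.1) := by
        rw [hrange]; exact Submodule.mem_top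
      obtain ⟨c, hc⟩ := (Submodule.mem_span_range_iff_exists_fun ℂ).mp hp
      obtain ⟨d, hd⟩ := (Submodule.mem_span_range_iff_exists_fun ℂ).mp hq
      have hTp : (∑ β : MultiIdx n s, c β • a (β.1 + unitIdx i)) = T p := by
        rw [← hc, map_sum]
        simp [hT]
      have hTq : (∑ β : MultiIdx n s, d β • a (β.1 + unitIdx i)) = T q := by
        rw [← hd, map_sum]
        simp [hT]
      have h0 := hM.dotProduct_mulVec_nonneg (Sum.elim c d)
      rw [key0 c d, hc, hd, hTp, hTq] at h0
      rw [Complex.le_def] at h0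
      have hre := h0.1
      simp only [Complex.add_re, Complex.zero_re] at hre
      have e1 : (inner ℂ p p : ℂ).re = ‖p‖^2 := by
        have := inner_self_eq_norm_sq (𝕜 := ℂ) p
        simpa using this
      have e2 : (inner ℂ (T q) (T q) : ℂ).re = ‖T q‖^2 := by
        have := inner_self_eq_norm_sq (𝕜 := ℂ) (T q)
        simpa using this
      have e3 : (inner ℂ q (T p) : ℂ).re = (inner ℂ (T p) q : ℂ).re := by
        rw [← inner_conj_symm (T p) q]
        rw [Complex.conj_re]
      rw [e1, e2, e3] at hre
      linarith
    have hle : ∀ q : EuclideanSpace ℂ (Fin t),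
        ‖LinearMap.adjoint T q‖^2 ≤ ‖T q‖^2 := by
      intro q
      have h := key (-(LinearMap.adjoint T q)) q
      have h3 : (inner ℂ (T (-(LinearMap.adjoint T q))) q : ℂ).re
          = -‖LinearMap.adjoint T q‖^2 := by
        rw [map_neg, inner_neg_left, ← LinearMap.adjoint_inner_right]
        have h4 := inner_self_eq_norm_sq (𝕜 := ℂ) (LinearMap.adjoint T q)
        simp only [RCLike.re_to_complex] at h4
        rw [Complex.neg_re, h4]
      rw [norm_neg, h3] at h
      linarith
    have hsum := sum_norm_adjoint T
    have hdiag : ∀ j, ‖T (EuclideanSpace.single j 1)‖^2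
        - ‖LinearMap.adjoint T (EuclideanSpace.single j 1)‖^2 = 0 := by
      have h0 : ∑ j, (‖T (EuclideanSpace.single j 1)‖^2
          - ‖LinearMap.adjoint T (EuclideanSpace.single j 1)‖^2) = 0 := by
        rw [Finset.sum_sub_distrib, hsum, sub_self]
      intro j
      exact (Finset.sum_eq_zero_iff_of_nonneg
        (fun j _ => sub_nonneg.2 (hle _))).mp h0 j (Finset.mem_univ j)
    set S : EuclideanSpace ℂ (Fin t) →ₗ[ℂ] EuclideanSpace ℂ (Fin t) :=
      LinearMap.adjoint T ∘ₗ T - T ∘ₗ LinearMap.adjoint T with hS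
    have hsym : S.IsSymmetric := by
      intro x y
      simp only [hS, LinearMap.sub_apply, LinearMap.comp_apply, inner_sub_left, inner_sub_right]
      have hA : (inner ℂ ((LinearMap.adjoint T) (T x)) y : ℂ)
          = inner ℂ x ((LinearMap.adjoint T) (T y)) := by
        rw [LinearMap.adjoint_inner_left, LinearMap.adjoint_inner_right]
      have hB : (inner ℂ (T ((LinearMap.adjoint T) x)) y : ℂ)
          = inner ℂ x (T ((LinearMap.adjoint T) y)) := by
        rw [← LinearMap.adjoint_inner_right, LinearMap.adjoint_inner_left]
      rw [hA, hB]
    have hSinner : ∀ x, (inner ℂ x (S x) : ℂ).re = ‖T x‖^2 - ‖LinearMap.adjoint T x‖^2 := by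
      intro x
      have h1 : (inner ℂ x ((LinearMap.adjoint T ∘ₗ T) x) : ℂ).re = ‖T x‖^2 := by
        rw [LinearMap.comp_apply, LinearMap.adjoint_inner_right]
        have := inner_self_eq_norm_sq (𝕜 := ℂ) (T x)
        simpa using this
      have h2 : (inner ℂ x ((T ∘ₗ LinearMap.adjoint T) x) : ℂ).re
          = ‖LinearMap.adjoint T x‖^2 := by
        rw [LinearMap.comp_apply, ← LinearMap.adjoint_inner_left]
        have := inner_self_eq_norm_sq (𝕜 := ℂ) (LinearMap.adjoint T x)
        simpa using this
      rw [hS, LinearMap.sub_apply, inner_sub_right, Complex.sub_re, h1, h2]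
    have hpos : ∀ x, 0 ≤ (inner ℂ x (S x) : ℂ).re := fun x => by
      rw [hSinner]
      linarith [hle x]
    have hzero : ∀ j, S (EuclideanSpace.single j 1) = 0 := fun j =>
      psd_apply_eq_zero S hsym hpos _ (by rw [hSinner]; linarith [hdiag j])
    have hS0 : S = 0 := by
      apply Module.Basis.ext (EuclideanSpace.basisFun (Fin t) ℂ).toBasis
      intro j
      simp only [LinearMap.zero_apply, OrthonormalBasis.coe_toBasis,
        EuclideanSpace.basisFun_apply]
      exact hzero j
    rw [hS] at hS0
    exact (sub_eq_zero.mp hS0).symm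
end

section
/- Let f, g_1, …, g_m ∈ ℝ[x_1,…,x_n], let K := {x ∈ ℝ^n : g_i(x) ≥ 0 for i = 1,…,m}, and let f_min be the infimum of f over K, taken in the extended reals. Let d_i := ⌈deg(g_i)/2⌉ and d_min := max(⌈deg(f)/2⌉, d_1, …, d_m). For r ≥ d_min define, with all infima taken in the extended reals over sequences y : ℕ^n → ℝ: ρ_r := inf { L_y(f) : y_0 = 1, M_r(y) ⪰ 0, and M_{r−d_i}(g_i y) ⪰ 0 for all i ∈ {1,…,m} }, and ρ'_r := inf { L_y(f) : y_0 = 1, M_{r−d_i}(g_i y) ⪰ 0 for all i ∈ {1,…,m}, and for every i ∈ {1,…,n} the block matrix indexed by two copies of ℕ^n_r with (β,γ) entries y(β+γ) (top-left), y(β+γ+e_i) (top-right and bottom-left), y(β+γ+2e_i) (bottom-right) is positive semidefinite }. Then for every r ≥ d_min: ρ_r ≤ ρ'_r ≤ ρ_{r+1} ≤ f_min. -/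
open scoped BigOperators

namespace Stmt8

/-- `MIdx n r` is the set ℕ^n_r = {α ∈ ℕ^n : |α| ≤ r} (multi-indices as finitely
supported functions, matching monomial exponents of `MvPolynomial`). -/
abbrev MIdx (n r : ℕ) := {α : Fin n →₀ ℕ // (∑ j, α j) ≤ r}

instance MIdx.finite (n r : ℕ) : Finite (MIdx n r) :=
  Finite.of_injective
    (fun a => (fun j => (⟨a.1 j, Nat.lt_succ_of_le
      ((Finset.single_le_sum (fun k _ => Nat.zero_le (a.1 k)) (Finset.mem_univ j)).trans
        a.2)⟩ : Fin (r + 1))))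
    (fun _ _ h => Subtype.ext (Finsupp.ext fun j => congrArg Fin.val (congrFun h j)))

noncomputable instance MIdx.fintype (n r : ℕ) : Fintype (MIdx n r) := Fintype.ofFinite _

/-- the Riesz functional L_y(f) = Σ_α f_α y_α. -/
noncomputable def Ly {n : ℕ} (y : (Fin n →₀ ℕ) → ℝ) (f : MvPolynomial (Fin n) ℝ) : ℝ :=
  ∑ α ∈ f.support, f.coeff α * y α

/-- the truncated moment matrix M_r(y), with entries y(β+γ), indexed by ℕ^n_r. -/
noncomputable def momMat {n : ℕ} (r : ℕ) (y : (Fin n →₀ ℕ) → ℝ) :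
    Matrix (MIdx n r) (MIdx n r) ℝ :=
  Matrix.of fun β γ => y (β.1 + γ.1)

/-- the localizing matrix M_r(g y), with entries Σ_α g_α y(α+β+γ), indexed by ℕ^n_r. -/
noncomputable def locMat {n : ℕ} (r : ℕ) (g : MvPolynomial (Fin n) ℝ)
    (y : (Fin n →₀ ℕ) → ℝ) : Matrix (MIdx n r) (MIdx n r) ℝ :=
  Matrix.of fun β γ => ∑ α ∈ g.support, g.coeff α * y (α + β.1 + γ.1)

/-- the block matrix [[M_r(y), M_r(x_i y)], [M_r(x_i y), M_r(x_i² y)]]. -/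
noncomputable def blockMat {n : ℕ} (r : ℕ) (y : (Fin n →₀ ℕ) → ℝ) (i : Fin n) :
    Matrix (MIdx n r ⊕ MIdx n r) (MIdx n r ⊕ MIdx n r) ℝ :=
  Matrix.fromBlocks
    (Matrix.of fun β γ => y (β.1 + γ.1))
    (Matrix.of fun β γ => y (β.1 + γ.1 + Finsupp.single i 1))
    (Matrix.of fun β γ => y (β.1 + γ.1 + Finsupp.single i 1))
    (Matrix.of fun β γ => y (β.1 + γ.1 + Finsupp.single i 1 + Finsupp.single i 1))

/-- d_i := ⌈deg(g_i)/2⌉. -/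
noncomputable def halfDeg {n : ℕ} (g : MvPolynomial (Fin n) ℝ) : ℕ :=
  (g.totalDegree + 1) / 2

/-- the r-th moment relaxation value ρ_r (infimum in the extended reals). -/
noncomputable def rho {n m : ℕ} (f : MvPolynomial (Fin n) ℝ)
    (g : Fin m → MvPolynomial (Fin n) ℝ) (r : ℕ) : EReal :=
  sInf {v : EReal | ∃ y : (Fin n →₀ ℕ) → ℝ,
    y 0 = 1 ∧ (momMat r y).PosSemidef ∧
    (∀ i, (locMat (r - halfDeg (g i)) (g i) y).PosSemidef) ∧
    v = (Ly y f : ℝ)}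

/-- the strengthened r-th moment relaxation value ρ'_r (infimum in the extended reals). -/
noncomputable def rho' {n m : ℕ} (f : MvPolynomial (Fin n) ℝ)
    (g : Fin m → MvPolynomial (Fin n) ℝ) (r : ℕ) : EReal :=
  sInf {v : EReal | ∃ y : (Fin n →₀ ℕ) → ℝ,
    y 0 = 1 ∧
    (∀ i, (locMat (r - halfDeg (g i)) (g i) y).PosSemidef) ∧
    (∀ i : Fin n, (blockMat r y i).PosSemidef) ∧
    v = (Ly y f : ℝ)}

/-- f_min = inf {f(x) : x ∈ K} in the extended reals, K = {x : g_i(x) ≥ 0 ∀ i}. -/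
noncomputable def fmin {n m : ℕ} (f : MvPolynomial (Fin n) ℝ)
    (g : Fin m → MvPolynomial (Fin n) ℝ) : EReal :=
  sInf {v : EReal | ∃ x : Fin n → ℝ,
    (∀ i, 0 ≤ MvPolynomial.eval x (g i)) ∧ v = (MvPolynomial.eval x f : ℝ)}

end Stmt8


section Aux
open Stmt8

lemma psd_aux {ι : Type*} [Fintype ι] (c : ℝ) (hc : 0 ≤ c) (v : ι → ℝ) :
    (Matrix.of fun β γ : ι => c * (v β * v γ)).PosSemidef := by
  refine Matrix.PosSemidef.of_dotProduct_mulVec_nonneg ?_ ?_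
  · ext β γ
    simp only [Matrix.conjTranspose_apply, Matrix.of_apply, star_trivial]
    ring
  · intro x
    have h : dotProduct (star x) ((Matrix.of fun β γ : ι => c * (v β * v γ)).mulVec x)
        = c * ((∑ j, v j * x j) * (∑ j, v j * x j)) := by
      simp only [Matrix.mulVec, dotProduct, Matrix.of_apply, star_trivial]
      rw [Fintype.sum_mul_sum, Finset.mul_sum]
      refine Finset.sum_congr rfl fun β _ => ?_
      rw [Finset.mul_sum, Finset.mul_sum]
      exact Finset.sum_congr rfl fun γ _ => by ring
    rw [h]
    exact mul_nonneg hc (mul_self_nonneg _)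

/-- the embedding of two copies of ℕ^n_r into ℕ^n_{r+1}: identity on the first copy,
adding e_i on the second. -/
noncomputable def emb {n : ℕ} (r : ℕ) (i : Fin n) : MIdx n r ⊕ MIdx n r → MIdx n (r + 1) :=
  Sum.elim (fun a => ⟨a.1, a.2.trans (Nat.le_succ r)⟩)
    (fun a => ⟨a.1 + Finsupp.single i 1, by
      have h2 := a.2
      simp only [Finsupp.coe_add, Pi.add_apply, Finset.sum_add_distrib,
        Finsupp.single_apply, Finset.sum_ite_eq, Finset.mem_univ, if_true]
      omega⟩)

lemma blockMat_eq {n : ℕ} (r : ℕ) (y : (Fin n →₀ ℕ) → ℝ) (i : Fin n) :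
    blockMat r y i = (momMat (r + 1) y).submatrix (emb r i) (emb r i) := by
  ext a b
  rcases a with a | a <;> rcases b with b | b <;>
    simp only [blockMat, momMat, emb, Matrix.fromBlocks, Matrix.submatrix_apply,
      Matrix.of_apply, Sum.elim_inl, Sum.elim_inr] <;>
    exact congrArg y (by abel)

end Aux

/-- for every r ≥ d_min, ρ_r ≤ ρ'_r ≤ ρ_{r+1} ≤ f_min. -/
theorem stmt8 {n m : ℕ} (hn : 1 ≤ n) (f : MvPolynomial (Fin n) ℝ)
    (g : Fin m → MvPolynomial (Fin n) ℝ) (r : ℕ)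
    (hr : max (Stmt8.halfDeg f) (Finset.univ.sup fun i => Stmt8.halfDeg (g i)) ≤ r) :
    Stmt8.rho f g r ≤ Stmt8.rho' f g r ∧
    Stmt8.rho' f g r ≤ Stmt8.rho f g (r + 1) ∧
    Stmt8.rho f g (r + 1) ≤ Stmt8.fmin f g := by
  obtain ⟨i0⟩ : Nonempty (Fin n) := ⟨⟨0, hn⟩⟩
  refine ⟨?_, ?_, ?_⟩
  · apply sInf_le_sInf
    rintro v ⟨y, hy0, hloc, hblock, rfl⟩
    refine ⟨y, hy0, ?_, hloc, rfl⟩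
    have h := (hblock i0).submatrix Sum.inl
    have he : Stmt8.momMat r y = (Stmt8.blockMat r y i0).submatrix Sum.inl Sum.inl := by
      ext β γ; rfl
    rw [he]; exact h
  · apply sInf_le_sInf
    rintro v ⟨y, hy0, hmom, hloc, rfl⟩
    refine ⟨y, hy0, fun i => ?_, fun i => ?_, rfl⟩
    · have h := (hloc i).submatrix
        (fun a : Stmt8.MIdx n (r - Stmt8.halfDeg (g i)) =>
          (⟨a.1, a.2.trans (by omega)⟩ : Stmt8.MIdx n (r + 1 - Stmt8.halfDeg (g i))))
      have he : Stmt8.locMat (r - Stmt8.halfDeg (g i)) (g i) y =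
          (Stmt8.locMat (r + 1 - Stmt8.halfDeg (g i)) (g i) y).submatrix
            (fun a : Stmt8.MIdx n (r - Stmt8.halfDeg (g i)) =>
              (⟨a.1, a.2.trans (by omega)⟩ : Stmt8.MIdx n (r + 1 - Stmt8.halfDeg (g i))))
            (fun a : Stmt8.MIdx n (r - Stmt8.halfDeg (g i)) =>
              (⟨a.1, a.2.trans (by omega)⟩ : Stmt8.MIdx n (r + 1 - Stmt8.halfDeg (g i)))) := by
        ext β γ; rfl
      rw [he]; exact h
    · rw [blockMat_eq]
      exact hmom.submatrix _
  · apply sInf_le_sInf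
    rintro v ⟨x, hx, rfl⟩
    set y : (Fin n →₀ ℕ) → ℝ := fun α => ∏ j, x j ^ α j with hy
    have key : ∀ a b : Fin n →₀ ℕ, y (a + b) = y a * y b := by
      intro a b
      rw [hy]
      simp only [← Finset.prod_mul_distrib]
      exact Finset.prod_congr rfl fun j _ => by simp [pow_add]
    refine ⟨y, by simp [hy], ?_, ?_, ?_⟩
    · rw [show Stmt8.momMat (r + 1) y =
          Matrix.of fun β γ : Stmt8.MIdx n (r + 1) => (1 : ℝ) * (y β.1 * y γ.1) by
        ext β γ; simp [Stmt8.momMat, key]]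
      exact psd_aux 1 zero_le_one _
    · intro i
      rw [show Stmt8.locMat (r + 1 - Stmt8.halfDeg (g i)) (g i) y =
          Matrix.of fun β γ : Stmt8.MIdx n (r + 1 - Stmt8.halfDeg (g i)) =>
            (MvPolynomial.eval x (g i)) * (y β.1 * y γ.1) by
        ext β γ
        simp only [Stmt8.locMat, Matrix.of_apply, key, MvPolynomial.eval_eq', Finset.sum_mul]
        exact Finset.sum_congr rfl fun α _ => by rw [hy]; ring]
      exact psd_aux _ (hx i) _
    · rw [MvPolynomial.eval_eq']
      rfl
end

section
/- Let f, g_1, …, g_m be self-conjugate polynomials in ℂ[x, x̄] with coefficient families f_{β,γ} and g^i_{β,γ}, let K := {w ∈ ℂ^n : g_i(w, conj w) ≥ 0 for i = 1,…,m}, and let f_min be the infimum of the real-valued function w ↦ f(w, conj w) over K, taken in the extended reals. Let d_0 := max{ max(|β|,|γ|) : f_{β,γ} ≠ 0 }, d_i := max{ max(|β|,|γ|) : g^i_{β,γ} ≠ 0 }, and d_min := max(d_0, d_1, …, d_m). For r ≥ d_min and s ∈ ℕ define, with all infima taken in the extended reals over complex pseudo-moment sequences y: τ_r := inf { L_y(f)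 : y(0,0) = 1, M_r^ℂ(y) ⪰ 0, and M^ℂ_{r−d_i}(g_i y) ⪰ 0 for all i ∈ {1,…,m} }, and τ'_{r,s} := inf over the same constraints with additionally, for every i ∈ {1,…,n}, the Hermitian block matrix indexed by two copies of ℕ^n_s with (β,γ) entries y(β,γ) (top-left), y(β+e_i, γ) (top-right), y(β, γ+e_i) (bottom-left), y(β+e_i, γ+e_i) (bottom-right) positive semidefinite. Then for every r ≥ d_min and every s ∈ ℕ: τ_r ≤ τ'_{r,s} ≤ τ'_{r,s+1} ≤ f_min. -/
open scoped BigOperators ComplexOrder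

namespace CStmt

/-- `MIdx n r` is the set ℕ^n_r = {α ∈ ℕ^n : |α| ≤ r}. -/
abbrev MIdx (n r : ℕ) := {α : Fin n → ℕ // (∑ j, α j) ≤ r}

instance MIdx.finite (n r : ℕ) : Finite (MIdx n r) :=
  Finite.of_injective
    (fun a => (fun j => (⟨a.1 j, Nat.lt_succ_of_le
      ((Finset.single_le_sum (fun k _ => Nat.zero_le (a.1 k)) (Finset.mem_univ j)).trans
        a.2)⟩ : Fin (r + 1))))
    (fun _ _ h => Subtype.ext (funext fun j => congrArg Fin.val (congrFun h j)))

noncomputable instance MIdx.fintype (n r : ℕ) : Fintype (MIdx n r) := Fintype.ofFinite _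

/-- the i-th standard unit multi-index e_i ∈ ℕ^n. -/
def unitIdx {n : ℕ} (i : Fin n) : Fin n → ℕ := fun j => if j = i then 1 else 0

/-- w^α := ∏_j w_j^{α_j}. -/
noncomputable def mono {n : ℕ} (w : Fin n → ℂ) (α : Fin n → ℕ) : ℂ := ∏ j, w j ^ α j

/-- a polynomial in ℂ[x, x̄] is a finitely supported coefficient family
F_{β,γ} ∈ ℂ indexed by pairs of multi-indices (β,γ) ∈ ℕ^n × ℕ^n. -/
abbrev CPoly (n : ℕ) := ((Fin n → ℕ) × (Fin n → ℕ)) →₀ ℂ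

/-- F is self-conjugate: F_{γ,β} = conj(F_{β,γ}). -/
def SelfConj {n : ℕ} (F : CPoly n) : Prop :=
  ∀ β γ : Fin n → ℕ, F (γ, β) = (starRingEnd ℂ) (F (β, γ))

/-- the (real) value f(w, conj w) = Σ_{β,γ} F_{β,γ} w^β conj(w)^γ of a self-conjugate
polynomial at w ∈ ℂ^n. -/
noncomputable def peval {n : ℕ} (F : CPoly n) (w : Fin n → ℂ) : ℝ :=
  (∑ p ∈ F.support, F p * mono w p.1 * (starRingEnd ℂ) (mono w p.2)).re

/-- the degree d = max{ max(|β|,|γ|) : F_{β,γ} ≠ 0 }. -/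
noncomputable def degF {n : ℕ} (F : CPoly n) : ℕ :=
  F.support.sup fun p => max (∑ j, p.1 j) (∑ j, p.2 j)

/-- y is a complex pseudo-moment sequence: y(γ,β) = conj(y(β,γ)). -/
def IsPseudoMoment {n : ℕ} (y : (Fin n → ℕ) → (Fin n → ℕ) → ℂ) : Prop :=
  ∀ β γ : Fin n → ℕ, y γ β = (starRingEnd ℂ) (y β γ)

/-- the (real) Riesz functional L_y(f) = Σ_{β,γ} f_{β,γ} y(β,γ) for self-conjugate f. -/
noncomputable def Ly {n : ℕ} (y : (Fin n → ℕ) → (Fin n → ℕ) → ℂ) (F : CPoly n) : ℝ :=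
  (∑ p ∈ F.support, F p * y p.1 p.2).re

/-- the truncated complex moment matrix M_r^ℂ(y), entries y(β,γ), indexed by ℕ^n_r. -/
noncomputable def momMat {n : ℕ} (r : ℕ) (y : (Fin n → ℕ) → (Fin n → ℕ) → ℂ) :
    Matrix (MIdx n r) (MIdx n r) ℂ :=
  Matrix.of fun β γ => y β.1 γ.1

/-- the complex localizing matrix M_r^ℂ(g y), entries Σ_{β',γ'} g_{β',γ'} y(β+β',γ+γ'). -/
noncomputable def locMat {n : ℕ} (r : ℕ) (F : CPoly n)
    (y : (Fin n → ℕ) → (Fin n → ℕ) → ℂ) : Matrix (MIdx n r) (MIdx n r) ℂ :=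
  Matrix.of fun β γ => ∑ p ∈ F.support, F p * y (β.1 + p.1) (γ.1 + p.2)

/-- the Hermitian block matrix [[M_s^ℂ(y), M_s^ℂ(x_i y)], [M_s^ℂ(x̄_i y), M_s^ℂ(|x_i|² y)]]. -/
noncomputable def blockMat {n : ℕ} (s : ℕ) (y : (Fin n → ℕ) → (Fin n → ℕ) → ℂ)
    (i : Fin n) : Matrix (MIdx n s ⊕ MIdx n s) (MIdx n s ⊕ MIdx n s) ℂ :=
  Matrix.fromBlocks
    (Matrix.of fun β γ => y β.1 γ.1)
    (Matrix.of fun β γ => y (β.1 + unitIdx i) γ.1)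
    (Matrix.of fun β γ => y β.1 (γ.1 + unitIdx i))
    (Matrix.of fun β γ => y (β.1 + unitIdx i) (γ.1 + unitIdx i))

/-- the r-th complex moment relaxation value τ_r (infimum in the extended reals). -/
noncomputable def tau {n m : ℕ} (F : CPoly n) (G : Fin m → CPoly n) (r : ℕ) : EReal :=
  sInf {v : EReal | ∃ y : (Fin n → ℕ) → (Fin n → ℕ) → ℂ,
    IsPseudoMoment y ∧ y 0 0 = 1 ∧ (momMat r y).PosSemidef ∧
    (∀ i, (locMat (r - degF (G i)) (G i) y).PosSemidef) ∧
    v = (Ly y F : ℝ)}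

/-- the strengthened complex moment relaxation value τ'_{r,s}
(infimum in the extended reals). -/
noncomputable def tau' {n m : ℕ} (F : CPoly n) (G : Fin m → CPoly n) (r s : ℕ) : EReal :=
  sInf {v : EReal | ∃ y : (Fin n → ℕ) → (Fin n → ℕ) → ℂ,
    IsPseudoMoment y ∧ y 0 0 = 1 ∧ (momMat r y).PosSemidef ∧
    (∀ i, (locMat (r - degF (G i)) (G i) y).PosSemidef) ∧
    (∀ i : Fin n, (blockMat s y i).PosSemidef) ∧
    v = (Ly y F : ℝ)}

/-- f_min = inf {f(w, conj w) : w ∈ K} in the extended reals,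
K = {w ∈ ℂ^n : g_i(w, conj w) ≥ 0 ∀ i}. -/
noncomputable def fmin {n m : ℕ} (F : CPoly n) (G : Fin m → CPoly n) : EReal :=
  sInf {v : EReal | ∃ w : Fin n → ℂ,
    (∀ i, 0 ≤ peval (G i) w) ∧ v = (peval F w : ℝ)}

lemma mono_zero {n : ℕ} (w : Fin n → ℂ) : mono w 0 = 1 := by
  simp [mono]

lemma mono_add {n : ℕ} (w : Fin n → ℂ) (a b : Fin n → ℕ) :
    mono w (a + b) = mono w a * mono w b := by
  simp [mono, Pi.add_apply, pow_add, Finset.prod_mul_distrib]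

lemma mono_unit {n : ℕ} (w : Fin n → ℂ) (i : Fin n) : mono w (unitIdx i) = w i := by
  rw [mono]
  rw [Finset.prod_eq_single i]
  · simp [unitIdx]
  · intro j _ hj; simp [unitIdx, hj]
  · simp

/-- rank-one matrices u ū* are positive semidefinite. -/
lemma rankOnePSD {ι : Type*} [Fintype ι] (u : ι → ℂ) :
    (Matrix.of fun a b => u a * (starRingEnd ℂ) (u b)).PosSemidef := by
  have h := Matrix.posSemidef_conjTranspose_mul_self
    (Matrix.of fun (_ : Fin 1) b => (starRingEnd ℂ) (u b))
  have heq : (Matrix.of fun (_ : Fin 1) b => (starRingEnd ℂ) (u b)).conjTranspose *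
      (Matrix.of fun (_ : Fin 1) b => (starRingEnd ℂ) (u b)) =
      Matrix.of fun a b => u a * (starRingEnd ℂ) (u b) := by
    ext a b
    simp [Matrix.mul_apply, Matrix.conjTranspose_apply, Fin.sum_univ_one]
  rwa [heq] at h

/-- for a self-conjugate polynomial, the full complex sum equals the real value. -/
lemma peval_eq_sum {n : ℕ} (F : CPoly n) (hF : SelfConj F) (w : Fin n → ℂ) :
    ((peval F w : ℝ) : ℂ) =
      ∑ p ∈ F.support, F p * mono w p.1 * (starRingEnd ℂ) (mono w p.2) := by
  set S := ∑ p ∈ F.support, F p * mono w p.1 * (starRingEnd ℂ) (mono w p.2) with hS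
  have hmem : ∀ p : (Fin n → ℕ) × (Fin n → ℕ), p ∈ F.support → (p.2, p.1) ∈ F.support := by
    intro p hp
    rw [Finsupp.mem_support_iff] at hp ⊢
    rw [hF p.1 p.2]
    simpa using hp
  have hconj : (starRingEnd ℂ) S = S := by
    rw [hS, map_sum]
    refine Finset.sum_nbij' (fun p => (p.2, p.1)) (fun p => (p.2, p.1))
      (fun p hp => hmem p hp) (fun p hp => hmem p hp)
      (fun p _ => rfl) (fun p _ => rfl) ?_
    rintro ⟨b, c⟩ _
    simp only [map_mul, Complex.conj_conj]
    rw [hF b c]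
    ring
  rw [peval, ← hS]
  exact Complex.conj_eq_iff_re.mp hconj

end CStmt

/-- for self-conjugate f, g_1, …, g_m, every r ≥ d_min and every s ∈ ℕ:
τ_r ≤ τ'_{r,s} ≤ τ'_{r,s+1} ≤ f_min. -/
theorem stmt9 {n m : ℕ} (hn : 1 ≤ n) (F : CStmt.CPoly n) (G : Fin m → CStmt.CPoly n)
    (hF : CStmt.SelfConj F) (hG : ∀ i, CStmt.SelfConj (G i)) (r s : ℕ)
    (hr : max (CStmt.degF F) (Finset.univ.sup fun i => CStmt.degF (G i)) ≤ r) :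
    CStmt.tau F G r ≤ CStmt.tau' F G r s ∧
    CStmt.tau' F G r s ≤ CStmt.tau' F G r (s + 1) ∧
    CStmt.tau' F G r (s + 1) ≤ CStmt.fmin F G := by
  open CStmt in
  refine ⟨sInf_le_sInf ?_, sInf_le_sInf ?_, sInf_le_sInf ?_⟩
  · rintro v ⟨y, h1, h2, h3, h4, _, h6⟩
    exact ⟨y, h1, h2, h3, h4, h6⟩
  · rintro v ⟨y, h1, h2, h3, h4, h5, h6⟩
    refine ⟨y, h1, h2, h3, h4, fun i => ?_, h6⟩
    have key := (h5 i).submatrix (Sum.map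
      (fun a : MIdx n s => (⟨a.1, a.2.trans (Nat.le_succ _)⟩ : MIdx n (s + 1)))
      (fun a : MIdx n s => (⟨a.1, a.2.trans (Nat.le_succ _)⟩ : MIdx n (s + 1))))
    have heq : (CStmt.blockMat (s + 1) y i).submatrix
        (Sum.map (fun a : MIdx n s => (⟨a.1, a.2.trans (Nat.le_succ _)⟩ : MIdx n (s + 1)))
          (fun a : MIdx n s => (⟨a.1, a.2.trans (Nat.le_succ _)⟩ : MIdx n (s + 1))))
        (Sum.map (fun a : MIdx n s => (⟨a.1, a.2.trans (Nat.le_succ _)⟩ : MIdx n (s + 1)))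
          (fun a : MIdx n s => (⟨a.1, a.2.trans (Nat.le_succ _)⟩ : MIdx n (s + 1)))) =
        CStmt.blockMat s y i := by
      ext a b
      cases a <;> cases b <;> rfl
    rwa [heq] at key
  · rintro v ⟨w, hw, rfl⟩
    refine ⟨fun β γ => mono w β * (starRingEnd ℂ) (mono w γ), ?_, ?_, ?_, ?_, ?_, ?_⟩
    · intro β γ
      simp only [map_mul, Complex.conj_conj]
      ring
    · simp [mono_zero]
    · exact rankOnePSD (fun β : MIdx n r => mono w β.1)
    · intro i
      set c : ℝ := peval (G i) w with hc
      have hceq : ((c : ℝ) : ℂ) =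
          ∑ p ∈ (G i).support, G i p * mono w p.1 * (starRingEnd ℂ) (mono w p.2) :=
        peval_eq_sum (G i) (hG i) w
      have key := rankOnePSD (fun β : MIdx n (r - degF (G i)) =>
        ((Real.sqrt c : ℝ) : ℂ) * mono w β.1)
      have heq : (Matrix.of fun (a b : MIdx n (r - degF (G i))) =>
          (((Real.sqrt c : ℝ) : ℂ) * mono w a.1) *
            (starRingEnd ℂ) (((Real.sqrt c : ℝ) : ℂ) * mono w b.1)) =
          CStmt.locMat (r - degF (G i)) (G i)
            (fun β γ => mono w β * (starRingEnd ℂ) (mono w γ)) := by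
        ext a b
        simp only [Matrix.of_apply, CStmt.locMat, map_mul, Complex.conj_ofReal]
        have : ∑ p ∈ (G i).support,
            G i p * (mono w (a.1 + p.1) * (starRingEnd ℂ) (mono w (b.1 + p.2))) =
            (mono w a.1 * (starRingEnd ℂ) (mono w b.1)) *
              ∑ p ∈ (G i).support, G i p * mono w p.1 * (starRingEnd ℂ) (mono w p.2) := by
          rw [Finset.mul_sum]
          refine Finset.sum_congr rfl fun p _ => ?_
          rw [mono_add, mono_add, map_mul]
          ring
        rw [this, ← hceq]
        have h2 : ((Real.sqrt c : ℝ) : ℂ) * ((Real.sqrt c : ℝ) : ℂ) = ((c : ℝ) : ℂ) := by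
          rw [← Complex.ofReal_mul, Real.mul_self_sqrt (hw i)]
        linear_combination (mono w a.1 * (starRingEnd ℂ) (mono w b.1)) * h2
      rw [← heq]
      exact key
    · intro i
      have key := rankOnePSD (fun a : MIdx n (s + 1) ⊕ MIdx n (s + 1) =>
        Sum.elim (fun β : MIdx n (s + 1) => mono w β.1)
          (fun β : MIdx n (s + 1) => mono w β.1 * (starRingEnd ℂ) (w i)) a)
      have heq : (Matrix.of fun (a b : MIdx n (s + 1) ⊕ MIdx n (s + 1)) =>
          Sum.elim (fun β : MIdx n (s + 1) => mono w β.1)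
            (fun β : MIdx n (s + 1) => mono w β.1 * (starRingEnd ℂ) (w i)) a *
          (starRingEnd ℂ) (Sum.elim (fun β : MIdx n (s + 1) => mono w β.1)
            (fun β : MIdx n (s + 1) => mono w β.1 * (starRingEnd ℂ) (w i)) b)) =
          CStmt.blockMat (s + 1) (fun β γ => mono w β * (starRingEnd ℂ) (mono w γ)) i := by
        ext a b
        cases a <;> cases b <;>
          simp only [Matrix.of_apply, Sum.elim_inl, Sum.elim_inr, CStmt.blockMat,
            Matrix.fromBlocks_apply₁₁, Matrix.fromBlocks_apply₁₂,
            Matrix.fromBlocks_apply₂₁, Matrix.fromBlocks_apply₂₂,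
            mono_add, mono_unit, map_mul, Complex.conj_conj] <;> ring
      rw [← heq]
      exact key
    · congr 2
      rw [CStmt.Ly, CStmt.peval]
      congr 1
      exact Finset.sum_congr rfl fun p _ => by ring
end
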